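/- Let (P, L) be a finite projective plane of order k and let G be its incidence graph. Then the functionality of G equals k + 1, i.e., fun(G) = k + 1. -/

import Mathlib

open Classical in
/-- `v` is a function of the set `U` of vertices in the graph `G`. -/
def SimpleGraph.IsFunctionOf {V : Type*} (G : SimpleGraph V) (v : V)
    (U : Finset V) : Prop :=
  v ∉ U ∧ ∃ f : (U → Bool) → Bool, ∀ w : V, w ∉ U → w ≠ v →
    (G.Adj v w ↔ f (fun u => decide (G.Adj w u.1)) = true)

/-- The functionality of a vertex: least size of a set of which it is a function. -/
noncomputable def SimpleGraph.vertexFun {V : Type*} (G : SimpleGraph V) (v : V) : ℕ :=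
  sInf {k | ∃ U : Finset V, U.card = k ∧ G.IsFunctionOf v U}

/-- The functionality of a graph. -/
noncomputable def SimpleGraph.graphFun {V : Type*} (G : SimpleGraph V) : ℕ :=
  sSup {m | ∃ W : Set V, W.Nonempty ∧
    m = sInf {k | ∃ v : W, k = (G.induce W).vertexFun v}}

/-- The symmetric difference of a pair of distinct vertices. -/
noncomputable def SimpleGraph.sdPair {V : Type*} (G : SimpleGraph V) (u v : V) : ℕ :=
  {w | w ≠ u ∧ w ≠ v ∧ ((G.Adj w u ∧ ¬ G.Adj w v) ∨ (¬ G.Adj w u ∧ G.Adj w v))}.ncard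

/-- The symmetric difference of a graph. -/
noncomputable def SimpleGraph.sdGraph {V : Type*} (G : SimpleGraph V) : ℕ :=
  sSup {m | ∃ W : Set V, (∃ u v : W, u ≠ v) ∧
    m = sInf {k | ∃ u v : W, u ≠ v ∧ k = (G.induce W).sdPair u v}}


/-- The incidence graph of an incidence structure of points and lines. -/
def incidenceGraph (P L : Type*) [Membership P L] : SimpleGraph (P ⊕ L) where
  Adj x y :=
    match x, y with
    | Sum.inl p, Sum.inr l => p ∈ l
    | Sum.inr l, Sum.inl p => p ∈ l
    | _, _ => False
  symm := ⟨by rintro (p | l) (q | m) h <;> simp_all⟩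
  loopless := ⟨by rintro (p | l) h <;> simp_all⟩

namespace ProofAux

open Finset Configuration Configuration.ProjectivePlane

/-- If all neighbours of `v` lie in `U`, then `v` is a function of `U`. -/
lemma vertexFun_le_of_nbhd {V : Type*} (G : SimpleGraph V) (v : V) (U : Finset V)
    (hv : v ∉ U) (h : ∀ w, G.Adj v w → w ∈ U) : G.vertexFun v ≤ U.card := by
  apply Nat.sInf_le
  refine ⟨U, rfl, hv, fun _ => false, fun w hw _ => ?_⟩
  simp only [Bool.false_eq_true, iff_false]
  exact fun hadj => hw (h w hadj)

lemma le_vertexFun {V : Type*} [Fintype V] (G : SimpleGraph V) (v : V) (n : ℕ)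
    (h : ∀ U : Finset V, v ∉ U → U.card ≤ n →
      ∃ w₁ w₂ : V, w₁ ∉ U ∧ w₁ ≠ v ∧ w₂ ∉ U ∧ w₂ ≠ v ∧
        G.Adj v w₁ ∧ ¬ G.Adj v w₂ ∧ ∀ u ∈ U, (G.Adj w₁ u ↔ G.Adj w₂ u)) :
    n + 1 ≤ G.vertexFun v := by
  classical
  refine le_csInf ⟨(Finset.univ.erase v).card, Finset.univ.erase v, rfl,
    Finset.notMem_erase _ _, fun _ => true, ?_⟩ ?_
  · intro w hw hwv
    exact (hw (Finset.mem_erase.mpr ⟨hwv, Finset.mem_univ w⟩)).elim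
  · rintro m ⟨U, rfl, hvU, f, hf⟩
    by_contra hlt
    push_neg at hlt
    obtain ⟨w₁, w₂, h1U, h1v, h2U, h2v, hadj1, hadj2, hsame⟩ := h U hvU (by omega)
    have hpat : (fun u : U => decide (G.Adj w₁ u.1)) = fun u : U => decide (G.Adj w₂ u.1) := by
      funext u
      exact decide_eq_decide.mpr (hsame u.1 u.2)
    have h1 := (hf w₁ h1U h1v).mp hadj1
    have h2 := hf w₂ h2U h2v
    rw [← hpat] at h2
    exact hadj2 (h2.mpr h1)

/-- Core counting lemma in a projective plane: given few points `UP` and lines `UL`,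
one can find a line through `p` avoiding everything, and a point avoiding everything. -/
lemma core_aux (P L : Type*) [Membership P L] [Fintype P] [Fintype L]
    [Configuration.ProjectivePlane P L] (p : P) (UP : Finset P) (UL : Finset L)
    (hp : p ∉ UP) (hcard : UP.card + UL.card ≤ order P L) :
    (∃ l : L, p ∈ l ∧ l ∉ UL ∧ ∀ q ∈ UP, q ∉ l) ∧
      (∃ r : P, r ≠ p ∧ r ∉ UP ∧ ∀ m ∈ UL, r ∉ m) := by
  classical
  have hk2 : 1 < order P L := one_lt_order P L
  obtain ⟨p₁, _, _, l₁, _, _, _⟩ := @ProjectivePlane.exists_config P L _ _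
  constructor
  · -- a line through p, not in UL, avoiding UP
    have hTcard : (univ.filter fun l : L => p ∈ l).card = order P L + 1 := by
      have h1 : Fintype.card {l : L // p ∈ l} = (univ.filter fun l : L => p ∈ l).card :=
        Fintype.card_subtype _
      have h2 : lineCount L p = Fintype.card {l : L // p ∈ l} := Nat.card_eq_fintype_card
      rw [← h1, ← h2, lineCount_eq]
    set g : P → L := fun q => if h : p = q then l₁ else HasLines.mkLine h with hg
    have huniq : ∀ (q : P) (l : L), q ∈ UP → p ∈ l → q ∈ l → l = g q := by
      intro q l hq hpl hql
      have hpq : p ≠ q := fun h => hp (h ▸ hq)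
      have hgq : g q = HasLines.mkLine hpq := dif_neg hpq
      have hax := HasLines.mkLine_ax (P := P) (L := L) hpq
      rw [hgq]
      rcases Nondegenerate.eq_or_eq hpl hql hax.1 hax.2 with h | h
      · exact absurd h hpq
      · exact h
    have hUcard : (UL ∪ UP.image g).card ≤ UL.card + UP.card :=
      (Finset.card_union_le _ _).trans (by
        exact Nat.add_le_add_left (Finset.card_image_le) _)
    have hne : ((univ.filter fun l : L => p ∈ l) \ (UL ∪ UP.image g)).Nonempty := by
      rw [← Finset.card_pos]
      have h3 := Finset.le_card_sdiff (UL ∪ UP.image g) (univ.filter fun l : L => p ∈ l)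
      omega
    obtain ⟨l, hl⟩ := hne
    rw [Finset.mem_sdiff, Finset.mem_filter] at hl
    obtain ⟨⟨-, hpl⟩, hlout⟩ := hl
    refine ⟨l, hpl, fun h => hlout (Finset.mem_union_left _ h), fun q hq hql => ?_⟩
    exact hlout (Finset.mem_union_right _ (Finset.mem_image.mpr ⟨q, hq, (huniq q l hq hpl hql).symm⟩))
  · -- a point r ≠ p, not in UP, avoiding all lines of UL
    set pts : L → Finset P := fun m => univ.filter fun q : P => q ∈ m with hpts
    have hptscard : ∀ m : L, (pts m).card = order P L + 1 := by
      intro m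
      have h1 : Fintype.card {q : P // q ∈ m} = (univ.filter fun q : P => q ∈ m).card :=
        Fintype.card_subtype _
      have h2 : pointCount P m = Fintype.card {q : P // q ∈ m} := Nat.card_eq_fintype_card
      have h3 := pointCount_eq P m
      simp only [hpts]
      omega
    have hcardP : Fintype.card P = (order P L) ^ 2 + order P L + 1 := card_points P L
    have hkk : (order P L) ^ 2 = order P L * order P L := sq (order P L)
    have hbadlt : (insert p (UP ∪ UL.biUnion pts)).card < Fintype.card P := by
      rcases UL.eq_empty_or_nonempty with hUL | ⟨m0, hm0⟩
      · have h1 : (insert p (UP ∪ UL.biUnion pts)).card ≤ 1 + UP.card := by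
          refine (Finset.card_insert_le _ _).trans ?_
          rw [hUL]
          simp
        have h2 : 1 < order P L * order P L :=
          lt_of_lt_of_le hk2 (Nat.le_mul_of_pos_left _ (by omega))
        omega
      · have hsub : UL.biUnion pts ⊆ pts m0 ∪ (UL.erase m0).biUnion fun m => pts m \ pts m0 := by
          intro x hx
          rw [Finset.mem_biUnion] at hx
          obtain ⟨m, hm, hxm⟩ := hx
          by_cases hxm0 : x ∈ pts m0
          · exact Finset.mem_union_left _ hxm0
          · have hmm0 : m ≠ m0 := by rintro rfl; exact hxm0 hxm
            exact Finset.mem_union_right _ (Finset.mem_biUnion.mpr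
              ⟨m, Finset.mem_erase.mpr ⟨hmm0, hm⟩, Finset.mem_sdiff.mpr ⟨hxm, hxm0⟩⟩)
        have hsd : ∀ m ∈ UL.erase m0, (pts m \ pts m0).card ≤ order P L := by
          intro m hm
          have hmm0 : m ≠ m0 := (Finset.mem_erase.mp hm).1
          have hint : (pts m ∩ pts m0).Nonempty := by
            obtain ⟨h1, h2⟩ := HasPoints.mkPoint_ax (P := P) (L := L) hmm0
            exact ⟨HasPoints.mkPoint hmm0, Finset.mem_inter.mpr
              ⟨by simp [hpts, h1], by simp [hpts, h2]⟩⟩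
          have h3 := Finset.card_inter_add_card_sdiff (pts m) (pts m0)
          have h4 := Finset.card_pos.mpr hint
          have h5 := hptscard m
          omega
        have hb1 : 1 ≤ UL.card := Finset.card_pos.mpr ⟨m0, hm0⟩
        obtain ⟨c, hc⟩ : ∃ c, UL.card = c + 1 := ⟨UL.card - 1, by omega⟩
        have hbu : ((UL.erase m0).biUnion fun m => pts m \ pts m0).card ≤
            c * order P L := by
          refine Finset.card_biUnion_le.trans ?_
          have := Finset.sum_le_card_nsmul (UL.erase m0) (fun m => (pts m \ pts m0).card)
            (order P L) hsd
          rwa [smul_eq_mul, Finset.card_erase_of_mem hm0, hc, Nat.add_sub_cancel] at this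
        have hlt : order P L < order P L * order P L := by nlinarith
        have htot : (insert p (UP ∪ UL.biUnion pts)).card ≤
            1 + (UP.card + ((order P L + 1) + c * order P L)) := by
          refine (Finset.card_insert_le _ _).trans ?_
          have h6 : (UP ∪ UL.biUnion pts).card ≤ UP.card + (UL.biUnion pts).card :=
            Finset.card_union_le _ _
          have h7 : (UL.biUnion pts).card ≤
              (pts m0).card + ((UL.erase m0).biUnion fun m => pts m \ pts m0).card :=
            (Finset.card_le_card hsub).trans (Finset.card_union_le _ _)
          have h8 := hptscard m0
          omega
        have hcK : c * order P L + order P L ≤ order P L * order P L := by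
          have h9 : c + 1 ≤ order P L := by omega
          calc c * order P L + order P L = (c + 1) * order P L := by ring
            _ ≤ order P L * order P L := Nat.mul_le_mul_right _ h9
        rcases Nat.eq_zero_or_pos c with rfl | hcpos
        · omega
        · omega
    have hne2 : (univ \ insert p (UP ∪ UL.biUnion pts)).Nonempty := by
      rw [← Finset.card_pos]
      have h3 := Finset.le_card_sdiff (insert p (UP ∪ UL.biUnion pts)) (univ : Finset P)
      rw [Finset.card_univ] at h3
      omega
    obtain ⟨r, hr⟩ := hne2
    rw [Finset.mem_sdiff, Finset.mem_insert, Finset.mem_union] at hr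
    push_neg at hr
    obtain ⟨-, hrp, hrUP, hrpts⟩ := hr
    refine ⟨r, hrp, hrUP, fun m hm hrm => ?_⟩
    exact hrpts (Finset.mem_biUnion.mpr ⟨m, hm, by simp [hpts, hrm]⟩)

/-- Core lemma at the level of the incidence graph. -/
lemma core (P L : Type*) [Membership P L] [Fintype P] [Fintype L]
    [Configuration.ProjectivePlane P L] (v : P ⊕ L) (U : Finset (P ⊕ L))
    (hv : v ∉ U) (hU : U.card ≤ order P L) :
    ∃ w₁ w₂ : P ⊕ L, w₁ ∉ U ∧ w₁ ≠ v ∧ w₂ ∉ U ∧ w₂ ≠ v ∧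
      (incidenceGraph P L).Adj v w₁ ∧ ¬ (incidenceGraph P L).Adj v w₂ ∧
      ∀ u ∈ U, ((incidenceGraph P L).Adj w₁ u ↔ (incidenceGraph P L).Adj w₂ u) := by
  classical
  obtain p | l₀ := v
  · obtain ⟨⟨l, hpl, hlU, hlq⟩, ⟨r, hrp, hrU, hrm⟩⟩ :=
      core_aux P L p U.toLeft U.toRight
        (fun h => hv (Finset.mem_toLeft.mp h))
        (by rw [Finset.card_toLeft_add_card_toRight]; exact hU)
    refine ⟨Sum.inr l, Sum.inl r,
      fun h => hlU (Finset.mem_toRight.mpr h),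
      fun h => Sum.inr_ne_inl h,
      fun h => hrU (Finset.mem_toLeft.mpr h),
      fun h => hrp (Sum.inl_injective h),
      hpl, fun h => h, ?_⟩
    rintro (q | m) hu
    · exact iff_of_false (hlq q (Finset.mem_toLeft.mpr hu)) (fun h => h)
    · exact iff_of_false (fun h => h) (hrm m (Finset.mem_toRight.mpr hu))
  · obtain ⟨⟨q, hql, hqU, hqm⟩, ⟨m, hml, hmU, hms⟩⟩ :=
      core_aux (Dual L) (Dual P) (l₀ : Dual L)
        (U.toRight : Finset (Dual L)) (U.toLeft : Finset (Dual P))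
        (fun h => hv (Finset.mem_toRight.mp h))
        (by rw [Configuration.ProjectivePlane.Dual.order, add_comm]
            have h := hU; rw [← Finset.card_toLeft_add_card_toRight] at h; exact h)
    refine ⟨Sum.inl q, Sum.inr m,
      fun h => hqU (Finset.mem_toLeft.mpr h),
      fun h => Sum.inl_ne_inr h,
      fun h => hmU (Finset.mem_toRight.mpr h),
      fun h => hml (Sum.inr_injective h),
      hql, fun h => h, ?_⟩
    rintro (s | m') hu
    · exact iff_of_false (fun h => h) (hms s (Finset.mem_toLeft.mpr hu))
    · exact iff_of_false (hqm m' (Finset.mem_toRight.mpr hu)) (fun h => h)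

/-- Each vertex of the incidence graph has exactly `order + 1` neighbours. -/
lemma ncard_nbhd (P L : Type*) [Membership P L] [Fintype P] [Fintype L]
    [Configuration.ProjectivePlane P L] (x : P ⊕ L) :
    {y | (incidenceGraph P L).Adj x y}.ncard = order P L + 1 := by
  classical
  obtain p | l := x
  · have himg : {y | (incidenceGraph P L).Adj (Sum.inl p) y} = Sum.inr '' {l : L | p ∈ l} := by
      ext y
      obtain q | m := y
      · simp only [Set.mem_setOf_eq, Set.mem_image]
        constructor
        · exact fun h => absurd h (fun h => h)
        · rintro ⟨l, -, h⟩; exact absurd h (by simp)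
      · simp only [Set.mem_setOf_eq, Set.mem_image]
        constructor
        · exact fun h => ⟨m, h, rfl⟩
        · rintro ⟨l, hl, h⟩
          rw [Sum.inr.injEq] at h
          exact h ▸ hl
    rw [himg, Set.ncard_image_of_injective _ Sum.inr_injective]
    have h1 : {l : L | p ∈ l}.ncard = lineCount L p := by
      rw [← Nat.card_coe_set_eq]; rfl
    rw [h1, lineCount_eq]
  · have himg : {y | (incidenceGraph P L).Adj (Sum.inr l) y} = Sum.inl '' {q : P | q ∈ l} := by
      ext y
      obtain q | m := y
      · simp only [Set.mem_setOf_eq, Set.mem_image]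
        constructor
        · exact fun h => ⟨q, h, rfl⟩
        · rintro ⟨q', hq', h⟩
          rw [Sum.inl.injEq] at h
          exact h ▸ hq'
      · simp only [Set.mem_setOf_eq, Set.mem_image]
        constructor
        · exact fun h => absurd h (fun h => h)
        · rintro ⟨q, -, h⟩; exact absurd h (by simp)
    rw [himg, Set.ncard_image_of_injective _ Sum.inl_injective]
    have h1 : {q : P | q ∈ l}.ncard = pointCount P l := by
      rw [← Nat.card_coe_set_eq]; rfl
    rw [h1, pointCount_eq]

lemma vertexFun_induce_le (P L : Type*) [Membership P L] [Fintype P] [Fintype L]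
    [Configuration.ProjectivePlane P L] (W : Set (P ⊕ L)) (v : ↥W) :
    ((incidenceGraph P L).induce W).vertexFun v ≤ order P L + 1 := by
  classical
  set G := incidenceGraph P L with hG
  have hfin : {u : ↥W | (G.induce W).Adj v u}.Finite := Set.toFinite _
  refine le_trans (vertexFun_le_of_nbhd _ v hfin.toFinset ?_ ?_) ?_
  · rw [Set.Finite.mem_toFinset]
    exact fun h => (G.induce W).irrefl h
  · intro w h
    rw [Set.Finite.mem_toFinset]
    exact h
  · rw [← Set.ncard_eq_toFinset_card _ hfin]
    have himg : Subtype.val '' {u : ↥W | (G.induce W).Adj v u} ⊆ {y | G.Adj v.1 y} := by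
      rintro _ ⟨u, hu, rfl⟩
      exact hu
    calc {u : ↥W | (G.induce W).Adj v u}.ncard
        = (Subtype.val '' {u : ↥W | (G.induce W).Adj v u}).ncard :=
          (Set.ncard_image_of_injective _ Subtype.val_injective).symm
      _ ≤ {y | G.Adj v.1 y}.ncard := Set.ncard_le_ncard himg (Set.toFinite _)
      _ = order P L + 1 := ncard_nbhd P L v.1

lemma le_vertexFun_univ (P L : Type*) [Membership P L] [Fintype P] [Fintype L]
    [Configuration.ProjectivePlane P L] (v : ↥(Set.univ : Set (P ⊕ L))) :
    order P L + 1 ≤ ((incidenceGraph P L).induce Set.univ).vertexFun v := by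
  classical
  apply le_vertexFun
  intro U hvU hUc
  obtain ⟨w₁, w₂, h1, h2, h3, h4, h5, h6, h7⟩ :=
    core P L v.1 (U.image Subtype.val)
      (by
        rw [Finset.mem_image]
        rintro ⟨u, hu, huv⟩
        exact hvU ((Subtype.ext huv) ▸ hu))
      (by rw [Finset.card_image_of_injective _ Subtype.val_injective]; exact hUc)
  refine ⟨⟨w₁, trivial⟩, ⟨w₂, trivial⟩,
    fun h => h1 (Finset.mem_image.mpr ⟨_, h, rfl⟩),
    fun h => h2 (congrArg Subtype.val h),
    fun h => h3 (Finset.mem_image.mpr ⟨_, h, rfl⟩),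
    fun h => h4 (congrArg Subtype.val h),
    h5, h6, ?_⟩
  intro u hu
  exact h7 u.1 (Finset.mem_image.mpr ⟨u, hu, rfl⟩)

end ProofAux

open ProofAux Configuration Configuration.ProjectivePlane in
/-- The incidence graph of a finite projective plane of order `k`
has functionality exactly `k + 1`. -/
theorem fun_incidenceGraph_projectivePlane
    (P L : Type*) [Membership P L] [Fintype P] [Fintype L]
    [Configuration.ProjectivePlane P L] (k : ℕ)
    (hk : Configuration.ProjectivePlane.order P L = k) :
    (incidenceGraph P L).graphFun = k + 1 := by
  classical
  subst hk
  set G := incidenceGraph P L with hG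
  obtain ⟨p₁, _, _, _, _, _, _⟩ := @ProjectivePlane.exists_config P L _ _
  set S : Set ℕ := {m | ∃ W : Set (P ⊕ L), W.Nonempty ∧
    m = sInf {k | ∃ v : W, k = (G.induce W).vertexFun v}} with hS
  have hub : ∀ m ∈ S, m ≤ order P L + 1 := by
    rintro m ⟨W, ⟨x, hx⟩, rfl⟩
    exact le_trans (Nat.sInf_le ⟨⟨x, hx⟩, rfl⟩) (vertexFun_induce_le P L W ⟨x, hx⟩)
  have hval : ∀ v : ↥(Set.univ : Set (P ⊕ L)),
      (G.induce Set.univ).vertexFun v = order P L + 1 :=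
    fun v => le_antisymm (vertexFun_induce_le P L _ v) (le_vertexFun_univ P L v)
  have hmem : order P L + 1 ∈ S := by
    refine ⟨Set.univ, ⟨Sum.inl p₁, trivial⟩, ?_⟩
    apply le_antisymm
    · exact le_csInf ⟨_, ⟨⟨Sum.inl p₁, trivial⟩, rfl⟩⟩ (by rintro n ⟨v, rfl⟩; exact (hval v).ge)
    · exact Nat.sInf_le ⟨⟨Sum.inl p₁, trivial⟩, (hval _).symm⟩
  show sSup S = order P L + 1
  exact le_antisymm (csSup_le ⟨_, hmem⟩ hub) (le_csSup ⟨order P L + 1, hub⟩ hmem)
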